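/- Let k > 0, R > r > 0 with r + k/2 ≤ R, and on (-R,R) let f(x) = k·χ_{(-r,r)}(x) and u(x) = min{ (r + k/2 - |x|)₊ , k } (with r > k/2). Then (1/2)∫_{-R}^{R} (u - f)² dx = k³/12. -/

import Mathlib

open MeasureTheory intervalIntegral

lemma cube_int (a b c : ℝ) : ∫ x in a..b, (x - c)^2 = ((b-c)^3 - (a-c)^3)/3 := by
  have h : ∀ x ∈ Set.uIcc a b, HasDerivAt (fun y => (y - c)^3 / 3) ((x - c)^2) x := by
    intro x _
    have h1 := ((hasDerivAt_id x).sub_const c).fun_pow 3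
    refine (h1.div_const 3).congr_deriv ?_
    simp only [id_eq]
    push_cast
    ring
  rw [intervalIntegral.integral_eq_sub_of_hasDerivAt h
    (by apply Continuous.intervalIntegrable; continuity)]
  ring

/-- Explicit value of the minimal energy in dimension one: with
`f = k·χ_{(-r,r)}` and `u = min{(r + k/2 - |x|)₊, k}` on `(-R,R)`,
`(1/2)∫_{-R}^{R} (u - f)² dx = k³/12`. -/
theorem stmt16 (k r R : ℝ) (hk : 0 < k) (hr0 : 0 < r) (hrR : r < R)
    (hRk : r + k/2 ≤ R) (hkr : k/2 < r) :
    (1/2) * ∫ x in (-R)..R,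
      (min (max (r + k/2 - |x|) 0) k -
        Set.indicator (Set.Ioo (-r) r) (fun _ => k) x)^2 = k^3/12 := by
  set G : ℝ → ℝ := fun x => (max (k/2 - |(|x| - r)|) 0)^2 with hGdef
  have hGeq : ∀ x, (min (max (r + k/2 - |x|) 0) k -
      Set.indicator (Set.Ioo (-r) r) (fun _ => k) x)^2 = G x := by
    intro x
    simp only [hGdef]
    by_cases hx : x ∈ Set.Ioo (-r) r
    · rw [Set.indicator_of_mem hx]
      obtain ⟨h1, h2⟩ := hx
      have habs : |x| < r := abs_lt.mpr ⟨h1, h2⟩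
      have h3 : |(|x| - r)| = -(|x| - r) := abs_of_nonpos (by linarith)
      rw [h3, max_eq_left (by linarith : (0:ℝ) ≤ r + k/2 - |x|)]
      by_cases h4 : r + k/2 - |x| ≤ k
      · rw [min_eq_left h4, max_eq_left (by linarith : (0:ℝ) ≤ k/2 - -(|x| - r))]
        ring
      · rw [min_eq_right (by linarith : k ≤ r + k/2 - |x|),
          max_eq_right (by linarith : k/2 - -(|x| - r) ≤ 0)]
        ring
    · rw [Set.indicator_of_notMem hx]
      have habs : r ≤ |x| := by
        by_contra h
        push_neg at h
        exact hx (Set.mem_Ioo.mpr (abs_lt.mp h))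
      have h3 : |(|x| - r)| = |x| - r := abs_of_nonneg (by linarith)
      rw [h3]
      by_cases h4 : r + k/2 - |x| ≤ 0
      · rw [max_eq_right h4, min_eq_left hk.le,
          max_eq_right (by linarith : k/2 - (|x| - r) ≤ 0)]
        ring
      · push_neg at h4
        rw [max_eq_left h4.le, min_eq_left (by linarith : r + k/2 - |x| ≤ k),
          max_eq_left (by linarith : (0:ℝ) ≤ k/2 - (|x| - r))]
        ring
  rw [intervalIntegral.integral_congr (fun x _ => hGeq x)]
  have hcont : Continuous G := by
    rw [hGdef]; fun_prop
  have hint : ∀ a b : ℝ, IntervalIntegrable G volume a b :=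
    fun a b => hcont.intervalIntegrable a b
  -- split points
  have e1 : (∫ x in (-R)..R, G x) =
      (∫ x in (-R)..(-(r+k/2)), G x) + (∫ x in (-(r+k/2))..(-r), G x) +
      (∫ x in (-r)..(-(r-k/2)), G x) + (∫ x in (-(r-k/2))..(r-k/2), G x) +
      (∫ x in (r-k/2)..r, G x) + (∫ x in r..(r+k/2), G x) +
      (∫ x in (r+k/2)..R, G x) := by
    rw [integral_add_adjacent_intervals (hint _ _) (hint _ _),
        integral_add_adjacent_intervals (hint _ _) (hint _ _),
        integral_add_adjacent_intervals (hint _ _) (hint _ _),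
        integral_add_adjacent_intervals (hint _ _) (hint _ _),
        integral_add_adjacent_intervals (hint _ _) (hint _ _),
        integral_add_adjacent_intervals (hint _ _) (hint _ _)]
  rw [e1]
  -- piece 1 : zero
  have p1 : (∫ x in (-R)..(-(r+k/2)), G x) = 0 := by
    rw [intervalIntegral.integral_congr (g := fun _ => (0:ℝ))]
    · simp
    · intro x hx
      rw [Set.uIcc_of_le (by linarith)] at hx
      obtain ⟨ha, hb⟩ := hx
      have hx0 : |x| = -x := abs_of_nonpos (by linarith)
      simp only [hGdef, hx0]
      rw [abs_of_nonneg (by linarith : (0:ℝ) ≤ -x - r),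
        max_eq_right (by linarith : k/2 - (-x - r) ≤ 0)]
      ring
  -- piece 2
  have p2 : (∫ x in (-(r+k/2))..(-r), G x) = k^3/24 := by
    rw [intervalIntegral.integral_congr (g := fun x => (x - (-(r+k/2)))^2)]
    · rw [cube_int]; ring
    · intro x hx
      rw [Set.uIcc_of_le (by linarith)] at hx
      obtain ⟨ha, hb⟩ := hx
      have hx0 : |x| = -x := abs_of_nonpos (by linarith)
      simp only [hGdef, hx0]
      rw [abs_of_nonneg (by linarith : (0:ℝ) ≤ -x - r),
        max_eq_left (by linarith : (0:ℝ) ≤ k/2 - (-x - r))]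
      ring
  -- piece 3
  have p3 : (∫ x in (-r)..(-(r-k/2)), G x) = k^3/24 := by
    rw [intervalIntegral.integral_congr (g := fun x => (x - (k/2 - r))^2)]
    · rw [cube_int]; ring
    · intro x hx
      rw [Set.uIcc_of_le (by linarith)] at hx
      obtain ⟨ha, hb⟩ := hx
      have hx0 : |x| = -x := abs_of_nonpos (by linarith)
      simp only [hGdef, hx0]
      rw [abs_of_nonpos (by linarith : -x - r ≤ 0),
        max_eq_left (by linarith : (0:ℝ) ≤ k/2 - -(-x - r))]
      ring
  -- piece 4 : zero
  have p4 : (∫ x in (-(r-k/2))..(r-k/2), G x) = 0 := by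
    rw [intervalIntegral.integral_congr (g := fun _ => (0:ℝ))]
    · simp
    · intro x hx
      rw [Set.uIcc_of_le (by linarith)] at hx
      obtain ⟨ha, hb⟩ := hx
      have hx0 : |x| ≤ r - k/2 := abs_le.mpr ⟨by linarith, hb⟩
      have hx1 : 0 ≤ |x| := abs_nonneg x
      simp only [hGdef]
      rw [abs_of_nonpos (by linarith : |x| - r ≤ 0),
        max_eq_right (by linarith : k/2 - -(|x| - r) ≤ 0)]
      ring
  -- piece 5
  have p5 : (∫ x in (r-k/2)..r, G x) = k^3/24 := by
    rw [intervalIntegral.integral_congr (g := fun x => (x - (r - k/2))^2)]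
    · rw [cube_int]; ring
    · intro x hx
      rw [Set.uIcc_of_le (by linarith)] at hx
      obtain ⟨ha, hb⟩ := hx
      have hx0 : |x| = x := abs_of_nonneg (by linarith)
      simp only [hGdef, hx0]
      rw [abs_of_nonpos (by linarith : x - r ≤ 0),
        max_eq_left (by linarith : (0:ℝ) ≤ k/2 - -(x - r))]
      ring
  -- piece 6
  have p6 : (∫ x in r..(r+k/2), G x) = k^3/24 := by
    rw [intervalIntegral.integral_congr (g := fun x => (x - (r + k/2))^2)]
    · rw [cube_int]; ring
    · intro x hx
      rw [Set.uIcc_of_le (by linarith)] at hx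
      obtain ⟨ha, hb⟩ := hx
      have hx0 : |x| = x := abs_of_nonneg (by linarith)
      simp only [hGdef, hx0]
      rw [abs_of_nonneg (by linarith : (0:ℝ) ≤ x - r),
        max_eq_left (by linarith : (0:ℝ) ≤ k/2 - (x - r))]
      ring
  -- piece 7 : zero
  have p7 : (∫ x in (r+k/2)..R, G x) = 0 := by
    rw [intervalIntegral.integral_congr (g := fun _ => (0:ℝ))]
    · simp
    · intro x hx
      rw [Set.uIcc_of_le (by linarith)] at hx
      obtain ⟨ha, hb⟩ := hx
      have hx0 : |x| = x := abs_of_nonneg (by linarith)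
      simp only [hGdef, hx0]
      rw [abs_of_nonneg (by linarith : (0:ℝ) ≤ x - r),
        max_eq_right (by linarith : k/2 - (x - r) ≤ 0)]
      ring
  rw [p1, p2, p3, p4, p5, p6, p7]
  ring
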